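/- For every visibly pushdown automaton A there exists a deterministic visibly pushdown automaton A' over the same alphabet such that for every well-nested word w, A accepts w if and only if A' accepts w. The states of A' are sets of pairs of states of A and the stack alphabet of A' consists of sets of triples (state, stack symbol, state). -/
import Mathlib


/-- Kinds of symbols in a structured alphabet: open, close, neutral. -/
inductive SymKind | op | cl | ne
deriving DecidableEq

/-- Well-nested words over a structured alphabet, given by a kind function. -/
inductive WellNested {α : Type*} (k : α → SymKind) : List α → Prop
  | nil : WellNested k []
  | neutral {a : α} : k a = SymKind.ne → WellNested k [a]
  | concat {w₁ w₂ : List α} : w₁ ≠ [] → w₂ ≠ [] →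
      WellNested k w₁ → WellNested k w₂ → WellNested k (w₁ ++ w₂)
  | nest {a b : α} {w : List α} : k a = SymKind.op → k b = SymKind.cl →
      WellNested k w → WellNested k (a :: w ++ [b])


/-- The number of symbols of a given kind occurring in a word. -/
def countKind {α : Type*} (k : α → SymKind) (t : SymKind) (w : List α) : ℕ :=
  w.countP (fun s => decide (k s = t))

/-- A visibly pushdown automaton over a structured alphabet (given by `kind`). -/
structure VPA (α Q Γ : Type*) where
  kind : α → SymKind
  /-- push transitions: on an open symbol, move state and push a stack symbol -/
  Δop : Q → α → Q → Γ → Prop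
  /-- pop transitions: on a close symbol, pop the matching top stack symbol -/
  Δcl : Q → α → Γ → Q → Prop
  /-- neutral transitions -/
  Δne : Q → α → Q → Prop
  init : Set Q
  final : Set Q

/-- `A.Steps c w c'`: there is a run of the VPA `A` over the word `w` from
configuration `c` to configuration `c'` (stacks are lists with the top in front). -/
inductive VPA.Steps {α Q Γ : Type*} (A : VPA α Q Γ) :
    Q × List Γ → List α → Q × List Γ → Prop
  | nil (c : Q × List Γ) : VPA.Steps A c [] c
  | op {q q' : Q} {σ : List Γ} {x : Γ} {a : α} {w : List α} {c : Q × List Γ} :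
      A.kind a = SymKind.op → A.Δop q a q' x →
      VPA.Steps A (q', x :: σ) w c → VPA.Steps A (q, σ) (a :: w) c
  | cl {q q' : Q} {σ : List Γ} {x : Γ} {a : α} {w : List α} {c : Q × List Γ} :
      A.kind a = SymKind.cl → A.Δcl q a x q' →
      VPA.Steps A (q', σ) w c → VPA.Steps A (q, x :: σ) (a :: w) c
  | ne {q q' : Q} {σ : List Γ} {a : α} {w : List α} {c : Q × List Γ} :
      A.kind a = SymKind.ne → A.Δne q a q' →
      VPA.Steps A (q', σ) w c → VPA.Steps A (q, σ) (a :: w) c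

/-- A VPA accepts a word if some run from an initial state with empty stack
ends in a final state (with empty stack). -/
def VPA.Accepts {α Q Γ : Type*} (A : VPA α Q Γ) (w : List α) : Prop :=
  ∃ q ∈ A.init, ∃ q' ∈ A.final, A.Steps (q, []) w (q', [])

/-- A VPA is deterministic: one initial state and functional transition relations. -/
def VPA.Deterministic {α Q Γ : Type*} (A : VPA α Q Γ) : Prop :=
  (∃ q₀, A.init = {q₀}) ∧
  (∀ q a q₁ x₁ q₂ x₂, A.Δop q a q₁ x₁ → A.Δop q a q₂ x₂ → q₁ = q₂ ∧ x₁ = x₂) ∧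
  (∀ q a x q₁ q₂, A.Δcl q a x q₁ → A.Δcl q a x q₂ → q₁ = q₂) ∧
  (∀ q a q₁ q₂, A.Δne q a q₁ → A.Δne q a q₂ → q₁ = q₂)


section Determinization

variable {α Q Γ : Type*}

/-- Runs compose over concatenation. -/
theorem VPA.Steps.append {A : VPA α Q Γ} {c c' c'' : Q × List Γ} {w₁ w₂ : List α}
    (h₁ : A.Steps c w₁ c') (h₂ : A.Steps c' w₂ c'') : A.Steps c (w₁ ++ w₂) c'' := by
  induction h₁ with
  | nil => exact h₂
  | op hk hd _ ih => exact VPA.Steps.op hk hd (ih h₂)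
  | cl hk hd _ ih => exact VPA.Steps.cl hk hd (ih h₂)
  | ne hk hd _ ih => exact VPA.Steps.ne hk hd (ih h₂)

/-- Runs split at any word boundary. -/
theorem VPA.Steps.split {A : VPA α Q Γ} {c c'' : Q × List Γ} (w₁ : List α) {w₂ : List α}
    (h : A.Steps c (w₁ ++ w₂) c'') : ∃ c', A.Steps c w₁ c' ∧ A.Steps c' w₂ c'' := by
  induction w₁ generalizing c with
  | nil => exact ⟨c, VPA.Steps.nil c, h⟩
  | cons a w₁ ih =>
    cases h with
    | op hk hd h' =>
      obtain ⟨c', h₁, h₂⟩ := ih h'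
      exact ⟨c', VPA.Steps.op hk hd h₁, h₂⟩
    | cl hk hd h' =>
      obtain ⟨c', h₁, h₂⟩ := ih h'
      exact ⟨c', VPA.Steps.cl hk hd h₁, h₂⟩
    | ne hk hd h' =>
      obtain ⟨c', h₁, h₂⟩ := ih h'
      exact ⟨c', VPA.Steps.ne hk hd h₁, h₂⟩

theorem VPA.Steps.nil_eq {A : VPA α Q Γ} {c c' : Q × List Γ}
    (h : A.Steps c [] c') : c = c' := by cases h; rfl

/-- Stacks can be extended below. -/
theorem VPA.Steps.push {A : VPA α Q Γ} {c c' : Q × List Γ} {w : List α}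
    (h : A.Steps c w c') (τ : List Γ) :
    A.Steps (c.1, c.2 ++ τ) w (c'.1, c'.2 ++ τ) := by
  induction h with
  | nil c => exact VPA.Steps.nil _
  | op hk hd h' ih => exact VPA.Steps.op hk hd ih
  | cl hk hd h' ih => exact VPA.Steps.cl hk hd ih
  | ne hk hd h' ih => exact VPA.Steps.ne hk hd ih

/-- A run over a well-nested word preserves the stack. -/
theorem wellNested_stack {A : VPA α Q Γ} {w : List α} (hw : WellNested A.kind w) :
    ∀ {q q' : Q} {σ σ' : List Γ}, A.Steps (q, σ) w (q', σ') → σ' = σ := by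
  induction hw with
  | nil =>
    intro q q' σ σ' h
    exact (Prod.mk.injEq _ _ _ _ ▸ h.nil_eq).2.symm
  | neutral ha =>
    intro q q' σ σ' h
    cases h with
    | op hk => rw [ha] at hk; cases hk
    | cl hk => rw [ha] at hk; cases hk
    | ne hk hd h' => exact (Prod.mk.injEq _ _ _ _ ▸ h'.nil_eq).2.symm
  | concat h1 h2 hw₁ hw₂ ih₁ ih₂ =>
    intro q q' σ σ' h
    obtain ⟨⟨qm, σm⟩, ha, hb⟩ := h.split _
    rw [ih₂ hb, ih₁ ha]
  | nest ha hb hw ih =>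
    intro q q' σ σ' h
    cases h with
    | cl hk => rw [ha] at hk; cases hk
    | ne hk => rw [ha] at hk; cases hk
    | op hk hd h' =>
      obtain ⟨⟨qm, σm⟩, h₁, h₂⟩ := h'.split _
      rw [ih h₁] at h₂
      cases h₂ with
      | op hk' => rw [hb] at hk'; cases hk'
      | ne hk' => rw [hb] at hk'; cases hk'
      | cl hk' hd' h'' => exact (Prod.mk.injEq _ _ _ _ ▸ h''.nil_eq).2.symm

/-- A run over a well-nested word does not depend on the stack. -/
theorem wellNested_restack {A : VPA α Q Γ} {w : List α} (hw : WellNested A.kind w) :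
    ∀ {q q' : Q} {σ : List Γ}, A.Steps (q, σ) w (q', σ) →
      ∀ τ : List Γ, A.Steps (q, τ) w (q', τ) := by
  induction hw with
  | nil =>
    intro q q' σ h τ
    cases (Prod.mk.injEq _ _ _ _ ▸ h.nil_eq).1
    exact VPA.Steps.nil _
  | neutral ha =>
    intro q q' σ h τ
    cases h with
    | op hk => rw [ha] at hk; cases hk
    | cl hk => rw [ha] at hk; cases hk
    | ne hk hd h' =>
      cases (Prod.mk.injEq _ _ _ _ ▸ h'.nil_eq).1
      exact VPA.Steps.ne hk hd (VPA.Steps.nil _)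
  | concat h1 h2 hw₁ hw₂ ih₁ ih₂ =>
    intro q q' σ h τ
    obtain ⟨⟨qm, σm⟩, ha, hb⟩ := h.split _
    have : σm = σ := wellNested_stack hw₁ ha
    subst this
    exact (ih₁ ha τ).append (ih₂ hb τ)
  | nest ha hb hw ih =>
    intro q q' σ h τ
    cases h with
    | ne hk => rw [ha] at hk; cases hk
    | cl hk => rw [ha] at hk; cases hk
    | op hk hd h' =>
      rename_i q₁ x
      obtain ⟨⟨qm, σm⟩, h₁, h₂⟩ := h'.split _
      have : σm = x :: σ := wellNested_stack hw h₁
      subst this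
      cases h₂ with
      | op hk' => rw [hb] at hk'; cases hk'
      | ne hk' => rw [hb] at hk'; cases hk'
      | cl hk' hd' h'' =>
        cases (Prod.mk.injEq _ _ _ _ ▸ h''.nil_eq).1
        cases (Prod.mk.injEq _ _ _ _ ▸ h''.nil_eq).2
        exact VPA.Steps.op hk hd
          ((ih h₁ (x :: τ)).append (VPA.Steps.cl hk' hd' (VPA.Steps.nil _)))

/-- Summary relation of a word. -/
def srel (A : VPA α Q Γ) (w : List α) (q q' : Q) : Prop := A.Steps (q, []) w (q', [])

theorem srel_nil {A : VPA α Q Γ} {q q' : Q} : srel A [] q q' ↔ q = q' := by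
  constructor
  · intro h; exact (Prod.mk.injEq _ _ _ _ ▸ h.nil_eq).1
  · rintro rfl; exact VPA.Steps.nil _

theorem srel_ne {A : VPA α Q Γ} {a : α} (ha : A.kind a = SymKind.ne) {q q' : Q} :
    srel A [a] q q' ↔ A.Δne q a q' := by
  constructor
  · intro h
    cases h with
    | op hk => rw [ha] at hk; cases hk
    | ne hk hd h' =>
      cases (Prod.mk.injEq _ _ _ _ ▸ h'.nil_eq).1
      exact hd
  · intro hd
    exact VPA.Steps.ne ha hd (VPA.Steps.nil _)

theorem srel_append {A : VPA α Q Γ} {w₁ w₂ : List α} (hw₁ : WellNested A.kind w₁)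
    {q q'' : Q} : srel A (w₁ ++ w₂) q q'' ↔ ∃ q', srel A w₁ q q' ∧ srel A w₂ q' q'' := by
  constructor
  · intro h
    obtain ⟨⟨qm, σm⟩, h₁, h₂⟩ := h.split _
    have : σm = [] := wellNested_stack hw₁ h₁
    subst this
    exact ⟨qm, h₁, h₂⟩
  · rintro ⟨q', h₁, h₂⟩
    exact h₁.append h₂

theorem srel_nest {A : VPA α Q Γ} {a b : α} {w : List α}
    (ha : A.kind a = SymKind.op) (hb : A.kind b = SymKind.cl)
    (hw : WellNested A.kind w) {q q₂ : Q} :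
    srel A (a :: w ++ [b]) q q₂ ↔
      ∃ x q' q₁, A.Δop q a q' x ∧ srel A w q' q₁ ∧ A.Δcl q₁ b x q₂ := by
  constructor
  · intro h
    cases h with
    | ne hk => rw [ha] at hk; cases hk
    | op hk hd h' =>
      rename_i q' x
      obtain ⟨⟨qm, σm⟩, h₁, h₂⟩ := h'.split _
      have : σm = [x] := wellNested_stack hw h₁
      subst this
      cases h₂ with
      | op hk' => rw [hb] at hk'; cases hk'
      | ne hk' => rw [hb] at hk'; cases hk'
      | cl hk' hd' h'' =>
        cases (Prod.mk.injEq _ _ _ _ ▸ h''.nil_eq).1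
        exact ⟨x, q', qm, hd, wellNested_restack hw h₁ [], hd'⟩
  · rintro ⟨x, q', q₁, hd, hm, hd'⟩
    exact VPA.Steps.op ha hd
      ((wellNested_restack hw hm [x]).append (VPA.Steps.cl hb hd' (VPA.Steps.nil _)))

/-- Composition of a summary set with a relation. -/
def scomp (S : Set (Q × Q)) (r : Q → Q → Prop) : Set (Q × Q) :=
  {pq | ∃ q, (pq.1, q) ∈ S ∧ r q pq.2}

def sdiag : Set (Q × Q) := {pq | pq.1 = pq.2}

/-- Stack symbol pushed by the determinized automaton. -/
def opPush (A : VPA α Q Γ) (S : Set (Q × Q)) (a : α) : Set (Q × Γ × Q) :=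
  {t | ∃ q, (t.1, q) ∈ S ∧ A.Δop q a t.2.2 t.2.1}

/-- State reached by the determinized automaton after a close symbol. -/
def clStep (A : VPA α Q Γ) (T : Set (Q × Γ × Q)) (S : Set (Q × Q)) (b : α) : Set (Q × Q) :=
  {pq | ∃ x q' q₁, (pq.1, x, q') ∈ T ∧ (q', q₁) ∈ S ∧ A.Δcl q₁ b x pq.2}

/-- The determinized automaton. -/
def detA (A : VPA α Q Γ) : VPA α (Set (Q × Q)) (Set (Q × Γ × Q)) where
  kind := A.kind
  Δop S a S' T := S' = sdiag ∧ T = opPush A S a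
  Δcl S a T S' := S' = clStep A T S a
  Δne S a S' := S' = {pq | ∃ q, (pq.1, q) ∈ S ∧ A.Δne q a pq.2}
  init := {sdiag}
  final := {S | ∃ p ∈ A.init, ∃ q ∈ A.final, (p, q) ∈ S}

theorem det_run {A : VPA α Q Γ} {w : List α} (hw : WellNested A.kind w) :
    ∀ (S : Set (Q × Q)) (σ : List (Set (Q × Γ × Q))),
      (detA A).Steps (S, σ) w (scomp S (srel A w), σ) := by
  induction hw with
  | nil =>
    intro S σ
    have : scomp S (srel A []) = S := by
      ext ⟨p, q⟩
      simp only [scomp, Set.mem_setOf_eq, srel_nil]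
      constructor
      · rintro ⟨q', hq, rfl⟩; exact hq
      · intro h; exact ⟨q, h, rfl⟩
    rw [this]
    exact VPA.Steps.nil _
  | neutral ha =>
    intro S σ
    refine VPA.Steps.ne ha ?_ (VPA.Steps.nil _)
    show scomp S (srel A [_]) = _
    ext ⟨p, q⟩
    simp only [scomp, Set.mem_setOf_eq, srel_ne ha]
  | concat h1 h2 hw₁ hw₂ ih₁ ih₂ =>
    rename_i w₁ w₂
    intro S σ
    have key : scomp S (srel A (w₁ ++ w₂)) = scomp (scomp S (srel A w₁)) (srel A w₂) := by
      ext ⟨p, q⟩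
      simp only [scomp, Set.mem_setOf_eq, srel_append hw₁]
      constructor
      · rintro ⟨q₀, hS, qm, hm, h₂⟩
        exact ⟨qm, ⟨q₀, hS, hm⟩, h₂⟩
      · rintro ⟨qm, ⟨q₀, hS, hm⟩, h₂⟩
        exact ⟨q₀, hS, qm, hm, h₂⟩
    rw [key]
    exact (ih₁ S σ).append (ih₂ _ σ)
  | nest ha hb hw ih =>
    rename_i a b v
    intro S σ
    have key : scomp S (srel A (a :: v ++ [b])) =
        clStep A (opPush A S a) (scomp sdiag (srel A v)) b := by
      ext ⟨p, q₂⟩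
      simp only [scomp, clStep, opPush, sdiag, Set.mem_setOf_eq, srel_nest ha hb hw]
      constructor
      · rintro ⟨q₀, hS, x, q', q₁, hop, hm, hcl⟩
        exact ⟨x, q', q₁, ⟨q₀, hS, hop⟩, ⟨q', rfl, hm⟩, hcl⟩
      · rintro ⟨x, q', q₁, ⟨q₀, hS, hop⟩, ⟨qm, rfl, hm⟩, hcl⟩
        exact ⟨q₀, hS, x, q', q₁, hop, hm, hcl⟩
    rw [key]
    exact VPA.Steps.op (A := detA A) ha ⟨rfl, rfl⟩
      ((ih sdiag _).append (VPA.Steps.cl hb rfl (VPA.Steps.nil _)))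

/-- Runs of the determinized automaton are unique. -/
theorem det_unique {A : VPA α Q Γ} {c c₁ c₂ : (Set (Q × Q)) × List (Set (Q × Γ × Q))}
    {w : List α} (h₁ : (detA A).Steps c w c₁) (h₂ : (detA A).Steps c w c₂) : c₁ = c₂ := by
  induction h₁ generalizing c₂ with
  | nil c => exact h₂.nil_eq
  | op hk hd h ih =>
    cases h₂ with
    | op hk' hd' h' =>
      obtain ⟨rfl, rfl⟩ := hd
      obtain ⟨rfl, rfl⟩ := hd'
      exact ih h'
    | cl hk' => rw [hk] at hk'; cases hk'
    | ne hk' => rw [hk] at hk'; cases hk'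
  | cl hk hd h ih =>
    cases h₂ with
    | op hk' => rw [hk] at hk'; cases hk'
    | cl hk' hd' h' =>
      subst hd; subst hd'
      exact ih h'
    | ne hk' => rw [hk] at hk'; cases hk'
  | ne hk hd h ih =>
    cases h₂ with
    | op hk' => rw [hk] at hk'; cases hk'
    | cl hk' => rw [hk] at hk'; cases hk'
    | ne hk' hd' h' =>
      subst hd; subst hd'
      exact ih h'

end Determinization

/-- Determinization of VPAs: every VPA has an equivalent deterministic VPA on
well-nested words, whose states are sets of pairs of states and whose stack
symbols are sets of (state, stack symbol, state) triples. -/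
theorem vpa_determinization {α Q Γ : Type*} (A : VPA α Q Γ) :
    ∃ A' : VPA α (Set (Q × Q)) (Set (Q × Γ × Q)),
      A'.kind = A.kind ∧ A'.Deterministic ∧
      ∀ w : List α, WellNested A.kind w → (A.Accepts w ↔ A'.Accepts w) := by
  refine ⟨detA A, rfl, ⟨⟨sdiag, rfl⟩, ?_, ?_, ?_⟩, ?_⟩
  · rintro q a q₁ x₁ q₂ x₂ ⟨rfl, rfl⟩ ⟨rfl, rfl⟩; exact ⟨rfl, rfl⟩
  · rintro q a x q₁ q₂ rfl rfl; rfl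
  · rintro q a q₁ q₂ rfl rfl; rfl
  · intro w hw
    have run := det_run hw sdiag []
    have hmem : ∀ p q : Q, (p, q) ∈ scomp sdiag (srel A w) ↔ srel A w p q := by
      intro p q
      simp only [scomp, sdiag, Set.mem_setOf_eq]
      constructor
      · rintro ⟨q', rfl, h⟩; exact h
      · intro h; exact ⟨p, rfl, h⟩
    constructor
    · rintro ⟨p, hp, q, hq, hrun⟩
      exact ⟨sdiag, rfl, scomp sdiag (srel A w),
        ⟨p, hp, q, hq, (hmem p q).2 hrun⟩, run⟩
    · rintro ⟨S₀, hS₀, S, hS, hrun⟩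
      cases hS₀
      have := det_unique hrun run
      cases this
      obtain ⟨p, hp, q, hq, hpq⟩ := hS
      exact ⟨p, hp, q, hq, (hmem p q).1 hpq⟩
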